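/- arXiv:1103.3623 — 3 statements merged into one kernel-verified Lean document; each statement's English description precedes it below -/
import Mathlib

section
/- Let G be a group of homeomorphisms of a Hausdorff topological space M such that G is factorizable (for every open cover 𝒰 of M and every g ∈ G, g is a finite product g₁⋯g_r where each g_i is supported in some member of 𝒰) and non-fixing (for every x ∈ M there is g ∈ G with g(x) ≠ x). Then for every x ∈ M and every open neighborhood U of x, there exists g ∈ G supported in U with g(x) ≠ x. -/
open Set

/-- `g` is supported in `U`: the closure of its non-fixed-point set lies in `U`. -/
def SupportedIn {M : Type*} [TopologicalSpace M] (g : Equiv.Perm M) (U : Set M) : Prop :=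
  closure {y | g y ≠ y} ⊆ U

/-- `G` is factorizable: every element factors as a finite product of elements of `G`
each supported in a member of any given open cover. -/
def IsFactorizable {M : Type*} [TopologicalSpace M] (G : Subgroup (Equiv.Perm M)) : Prop :=
  ∀ 𝒰 : Set (Set M), (∀ U ∈ 𝒰, IsOpen U) → ⋃₀ 𝒰 = univ → ∀ g ∈ G,
    ∃ l : List (Equiv.Perm M), (∀ f ∈ l, f ∈ G ∧ ∃ U ∈ 𝒰, SupportedIn f U) ∧ l.prod = g

private lemma aux_list {M : Type*} [TopologicalSpace M] (G : Subgroup (Equiv.Perm M))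
    (x : M) (U : Set M) :
    ∀ l : List (Equiv.Perm M),
      (∀ f ∈ l, f ∈ G ∧ (SupportedIn f U ∨ f x = x)) → l.prod x ≠ x →
      ∃ g ∈ G, SupportedIn g U ∧ g x ≠ x := by
  intro l
  induction l with
  | nil => intro _ h; simp at h
  | cons f t ih =>
    intro hmem hmove
    by_cases ht : t.prod x = x
    · have hfx : f x ≠ x := by
        simpa [List.prod_cons, Equiv.Perm.mul_apply, ht] using hmove
      obtain ⟨hfG, hsup⟩ := hmem f (List.mem_cons_self (a := f) (l := t))
      rcases hsup with hs | hfix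
      · exact ⟨f, hfG, hs, hfx⟩
      · exact absurd hfix hfx
    · exact ih (fun f hf => hmem f (List.mem_cons_of_mem _ hf)) ht

/-- For a factorizable non-fixing group of homeomorphisms of a Hausdorff space in which
every point has a neighborhood basis of open sets with proper closure, every point can be
moved by an element supported in any prescribed open neighborhood of that point. -/
theorem exists_supported_moving {M : Type*} [TopologicalSpace M] [T2Space M]
    (hbasis : ∀ x : M, ∀ W ∈ nhds x, ∃ V : Set M, IsOpen V ∧ x ∈ V ∧ V ⊆ W ∧
      closure V ≠ univ)
    (G : Subgroup (Equiv.Perm M)) (hcont : ∀ g ∈ G, Continuous ⇑g)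
    (hfact : IsFactorizable G) (hnonfix : ∀ x : M, ∃ g ∈ G, g x ≠ x)
    (x : M) (U : Set M) (hU : IsOpen U) (hxU : x ∈ U) :
    ∃ g ∈ G, SupportedIn g U ∧ g x ≠ x := by
  obtain ⟨g₀, hg₀G, hg₀x⟩ := hnonfix x
  set 𝒰 : Set (Set M) := {U, {x}ᶜ} with h𝒰
  have hopen : ∀ V ∈ 𝒰, IsOpen V := by
    rintro V (rfl | rfl)
    · exact hU
    · exact isOpen_compl_singleton
  have hcover : ⋃₀ 𝒰 = univ := by
    apply eq_univ_of_forall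
    intro y
    by_cases hy : y = x
    · exact ⟨U, Or.inl rfl, hy ▸ hxU⟩
    · exact ⟨{x}ᶜ, Or.inr rfl, hy⟩
  obtain ⟨l, hl, hlprod⟩ := hfact 𝒰 hopen hcover g₀ hg₀G
  apply aux_list G x U l _ (by rw [hlprod]; exact hg₀x)
  intro f hf
  obtain ⟨hfG, V, hV𝒰, hsup⟩ := hl f hf
  refine ⟨hfG, ?_⟩
  rcases hV𝒰 with rfl | rfl
  · exact Or.inl hsup
  · right
    by_contra hfx
    exact hsup (subset_closure hfx) rfl
end

section
/- Let G be a factorizable, non-fixing group of homeomorphisms of a topological manifold M of positive dimension, and suppose the commutator subgroup [G,G] admits a nonempty proper closed invariant subset L ⊆ M (i.e. a proper minimal set of the associated foliation exists). Then [G,G] is not simple. -/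
open Set

private lemma perm_inv_apply_eq_self {M : Type*} {f : Equiv.Perm M} {y : M}
    (h : f y = y) : f⁻¹ y = y := by
  have := congrArg (⇑f⁻¹) h
  simpa using this.symm

private lemma list_prod_fix {M : Type*} (l : List (Equiv.Perm M)) (q : M)
    (h : ∀ f ∈ l, f q = q) : l.prod q = q := by
  induction l with
  | nil => simp
  | cons a t ih =>
    rw [List.prod_cons, Equiv.Perm.mul_apply,
      ih (fun f hf => h f (List.mem_cons_of_mem a hf)), h a List.mem_cons_self]

/-- Fragmentation: near any point moved by some element of `G`, there is an element of `G`
moving that point whose support lies in a prescribed open neighborhood. -/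
private lemma exists_small_move {M : Type*} [TopologicalSpace M] [T2Space M]
    (G : Subgroup (Equiv.Perm M)) (hfact : IsFactorizable G)
    {q : M} {g : Equiv.Perm M} (hg : g ∈ G) (hgq : g q ≠ q)
    {V : Set M} (hV : IsOpen V) (hqV : q ∈ V) :
    ∃ f ∈ G, f q ≠ q ∧ closure {y | f y ≠ y} ⊆ V := by
  obtain ⟨l, hl, hprod⟩ := hfact {V, {q}ᶜ}
    (by
      rintro U hU
      rcases hU with rfl | hU
      · exact hV
      · rw [Set.mem_singleton_iff] at hU
        subst hU
        exact isOpen_compl_singleton)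
    (by
      apply Set.eq_univ_iff_forall.mpr
      intro x
      by_cases hx : x = q
      · exact ⟨V, by simp, hx ▸ hqV⟩
      · exact ⟨{q}ᶜ, by simp, hx⟩)
    g hg
  have hmove : ∃ f ∈ l, f q ≠ q := by
    by_contra h
    push_neg at h
    exact hgq (hprod ▸ list_prod_fix l q h)
  obtain ⟨f, hfl, hfq⟩ := hmove
  obtain ⟨hfG, U, hU, hsupp⟩ := hl f hfl
  have hqU : q ∈ U := hsupp (subset_closure hfq)
  rcases hU with rfl | hU
  · exact ⟨f, hfG, hfq, hsupp⟩
  · rw [Set.mem_singleton_iff] at hU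
    subst hU
    exact absurd rfl hqU

/-- Commutator trick: given `g ∈ G` moving `q`, inside an invariant open set `O ∋ q`,
there is an element of `⁅G,G⁆` moving `q` and supported in `O`. -/
private lemma exists_commutator_move {M : Type*} [TopologicalSpace M] [T2Space M]
    (G : Subgroup (Equiv.Perm M)) (hcont : ∀ g ∈ G, Continuous ⇑g)
    (hfact : IsFactorizable G)
    {q : M} {O : Set M} (hO : IsOpen O) (hqO : q ∈ O)
    {g : Equiv.Perm M} (hg : g ∈ G) (hgq : g q ≠ q)
    (hmaps : ∀ x ∈ O, g x ∈ O) :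
    ∃ c ∈ ⁅G, G⁆, c q ≠ q ∧ ∀ y, c y ≠ y → y ∈ O := by
  obtain ⟨W₁, W₂, hW₁, hW₂, hqW, hgqW, hdisj⟩ := t2_separation (Ne.symm hgq)
  set B : Set M := O ∩ W₁ ∩ g ⁻¹' W₂ with hBdef
  have hBopen : IsOpen B := ((hO.inter hW₁).inter (hW₂.preimage (hcont g hg)))
  have hqB : q ∈ B := ⟨⟨hqO, hqW⟩, hgqW⟩
  have hBdisj : ∀ x ∈ B, g x ∉ B := by
    intro x hx hgx
    exact Set.disjoint_left.mp hdisj hgx.1.2 hx.2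
  obtain ⟨f, hfG, hfq, hsupp⟩ := exists_small_move G hfact hg hgq hBopen hqB
  have hS : {y | f y ≠ y} ⊆ B := fun y hy => hsupp (subset_closure hy)
  have hfix : ∀ y, y ∉ B → f y = y := by
    intro y hy
    by_contra h
    exact hy (hS h)
  have hfixinv : ∀ y, y ∉ B → f⁻¹ y = y := fun y hy => perm_inv_apply_eq_self (hfix y hy)
  refine ⟨f * g * f⁻¹ * g⁻¹, ?_, ?_, ?_⟩
  · open scoped commutatorElement in
    have : f * g * f⁻¹ * g⁻¹ = ⁅f, g⁆ := by rw [commutatorElement_def]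
    rw [this]
    exact Subgroup.commutator_mem_commutator hfG hg
  · have h1 : g⁻¹ q ∉ B := by
      intro hmem
      have := hBdisj _ hmem
      rw [(show ∀ x, g (g⁻¹ x) = x from g.apply_symm_apply)] at this
      exact this hqB
    have h2 : f⁻¹ (g⁻¹ q) = g⁻¹ q := hfixinv _ h1
    show (f * g * f⁻¹ * g⁻¹) q ≠ q
    simp only [Equiv.Perm.mul_apply, h2, (show ∀ x, g (g⁻¹ x) = x from g.apply_symm_apply)]
    exact hfq
  · intro y hcy
    by_contra hyO
    apply hcy
    have hyB : y ∉ B := fun hyB => hyO hyB.1.1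
    have hginvB : g⁻¹ y ∉ B := by
      intro hmem
      have : g (g⁻¹ y) ∈ O := hmaps _ hmem.1.1
      rw [(show ∀ x, g (g⁻¹ x) = x from g.apply_symm_apply)] at this
      exact hyO this
    show (f * g * f⁻¹ * g⁻¹) y = y
    simp only [Equiv.Perm.mul_apply, hfixinv _ hginvB, (show ∀ x, g (g⁻¹ x) = x from g.apply_symm_apply),
      hfix y hyB]

/-- If a factorizable, non-fixing group of homeomorphisms of a topological manifold of
positive dimension is such that `[G,G]` admits a nonempty proper closed invariant set,
then `[G,G]` is not simple. -/
theorem not_simple_of_proper_minimal_set (n : ℕ) (hn : 0 < n) {M : Type*}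
    [TopologicalSpace M] [T2Space M] [ChartedSpace (EuclideanSpace ℝ (Fin n)) M]
    (G : Subgroup (Equiv.Perm M)) (hcont : ∀ g ∈ G, Continuous ⇑g)
    (hfact : IsFactorizable G) (hnonfix : ∀ x : M, ∃ g ∈ G, g x ≠ x)
    (L : Set M) (hLclosed : IsClosed L) (hLne : L.Nonempty) (hLproper : L ≠ univ)
    (hLinv : ∀ g ∈ ⁅G, G⁆, ⇑g '' L = L) :
    ¬ IsSimpleGroup ↥⁅G, G⁆ := by
  intro hsimple
  -- the subgroup of `⁅G,G⁆` fixing `L` pointwise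
  let N : Subgroup ↥⁅G, G⁆ :=
    { carrier := {a | ∀ x ∈ L, (a : Equiv.Perm M) x = x}
      one_mem' := by intro x _; simp
      mul_mem' := by
        intro a b ha hb x hx
        have := hb x hx
        simp only [Subgroup.coe_mul, Equiv.Perm.mul_apply, this, ha x hx]
      inv_mem' := by
        intro a ha x hx
        exact perm_inv_apply_eq_self (ha x hx) }
  have hNnormal : N.Normal := by
    constructor
    intro a ha h x hx
    have hxh : x ∈ (↑h : Equiv.Perm M) '' L := by
      rw [hLinv _ h.2]; exact hx
    obtain ⟨z, hz, hzx⟩ := hxh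
    have hinvx : ((↑h : Equiv.Perm M))⁻¹ x = z := by
      rw [← hzx]; exact Equiv.symm_apply_apply _ _
    have hcoe : ((h * a * h⁻¹ : ↥⁅G, G⁆) : Equiv.Perm M)
        = (↑h : Equiv.Perm M) * ↑a * (↑h : Equiv.Perm M)⁻¹ := rfl
    rw [hcoe]
    simp only [Equiv.Perm.mul_apply, hinvx, ha z hz, hzx]
  rcases Subgroup.Normal.eq_bot_or_eq_top hNnormal with hbot | htop
  · -- N = ⊥ : but there is a nontrivial commutator fixing L pointwise
    have : ∃ p, p ∉ L := by
      by_contra h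
      push_neg at h
      exact hLproper (Set.eq_univ_iff_forall.mpr h)
    obtain ⟨p, hp⟩ := this
    obtain ⟨g₀, hg₀, hg₀p⟩ := hnonfix p
    obtain ⟨g₁, hg₁, hg₁p, hg₁supp⟩ :=
      exists_small_move G hfact hg₀ hg₀p hLclosed.isOpen_compl (by exact hp)
    have hg₁fix : ∀ x ∈ L, g₁ x = x := by
      intro x hx
      by_contra h
      exact (hg₁supp (subset_closure h)) hx
    have hmaps : ∀ x ∈ Lᶜ, g₁ x ∈ Lᶜ := by
      intro x hx hgx
      apply hx
      have := hg₁fix _ hgx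
      have : g₁ x = x := g₁.injective this
      exact this ▸ hgx
    obtain ⟨c, hcmem, hcp, hcsupp⟩ :=
      exists_commutator_move G hcont hfact hLclosed.isOpen_compl hp hg₁ hg₁p hmaps
    have hcN : (⟨c, hcmem⟩ : ↥⁅G, G⁆) ∈ N := by
      intro x hx
      by_contra h
      exact (hcsupp x h) hx
    rw [hbot, Subgroup.mem_bot] at hcN
    have : c = 1 := by
      have := congrArg (fun a : ↥⁅G, G⁆ => (a : Equiv.Perm M)) hcN
      simpa using this
    exact hcp (by rw [this]; rfl)
  · -- N = ⊤ : but there is a commutator moving a point of L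
    obtain ⟨x₀, hx₀⟩ := hLne
    obtain ⟨g₀, hg₀, hg₀x⟩ := hnonfix x₀
    obtain ⟨c, hcmem, hcx, _⟩ :=
      exists_commutator_move G hcont hfact isOpen_univ (mem_univ x₀) hg₀ hg₀x
        (fun x _ => mem_univ _)
    have : (⟨c, hcmem⟩ : ↥⁅G, G⁆) ∈ N := htop ▸ Subgroup.mem_top _
    exact hcx (this x₀ hx₀)
end

section
/- Let G be a group acting faithfully by bijections on a set M, H a normal subgroup of G, h ∈ H, and U ⊆ M with h(U) ∩ U = ∅. Then for all f, g ∈ G supported in U, the commutator [f, g] belongs to H. -/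
open scoped commutatorElement

/-- Two permutations supported in disjoint sets commute. -/
lemma perm_commute_of_disjoint_supp {M : Type*} (a b : Equiv.Perm M) (A B : Set M)
    (hAB : A ∩ B = ∅) (ha : ∀ y ∉ A, a y = y) (hb : ∀ y ∉ B, b y = y) :
    Commute a b := by
  have hmemA : ∀ x, x ∈ A → a x ∈ A := by
    intro x hx
    by_contra hax
    have := ha (a x) hax
    have : a x = x := a.injective this
    exact hax (this.symm ▸ hx)
  have hmemB : ∀ x, x ∈ B → b x ∈ B := by
    intro x hx
    by_contra hbx
    have := hb (b x) hbx
    have : b x = x := b.injective this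
    exact hbx (this.symm ▸ hx)
  have hdis : ∀ x, x ∈ A → x ∉ B := fun x hx hx' =>
    Set.eq_empty_iff_forall_notMem.mp hAB x ⟨hx, hx'⟩
  ext x
  simp only [Equiv.Perm.mul_apply]
  by_cases hxA : x ∈ A
  · have hxB : x ∉ B := hdis x hxA
    rw [hb x hxB, hb (a x) (hdis _ (hmemA x hxA))]
  · rw [ha x hxA]
    by_cases hxB : x ∈ B
    · exact ha (b x) (fun hc => hdis _ hc (hmemB x hxB))
    · rw [hb x hxB, ha x hxA]

/-- Ping-pong step: if `G` acts faithfully by bijections on `M` (realized as a subgroup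
of the permutation group), `H` is a normal subgroup of `G`, `h ∈ H` satisfies
`h(U) ∩ U = ∅`, and `f, g ∈ G` are supported in `U`, then `[f, g] ∈ H`. -/
theorem commutator_mem_normal {M : Type*} (G : Subgroup (Equiv.Perm M))
    (H : Subgroup G) (hHnormal : H.Normal)
    (h : G) (hh : h ∈ H) (U : Set M) (hdisj : (⇑(h : Equiv.Perm M) '' U) ∩ U = ∅)
    (f g : G)
    (hf : ∀ y ∉ U, (f : Equiv.Perm M) y = y) (hg : ∀ y ∉ U, (g : Equiv.Perm M) y = y) :
    ⁅f, g⁆ ∈ H := by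
  -- f' = h f h⁻¹ is supported in h '' U
  set f' : G := h * f * h⁻¹ with hf'def
  have hf'supp : ∀ y ∉ (⇑(h : Equiv.Perm M) '' U), (f' : Equiv.Perm M) y = y := by
    intro y hy
    have hy' : (h : Equiv.Perm M)⁻¹ y ∉ U := by
      intro hc
      exact hy ⟨_, hc, by simp⟩
    have : (f : Equiv.Perm M) ((h : Equiv.Perm M)⁻¹ y) = (h : Equiv.Perm M)⁻¹ y := hf _ hy'
    simpa [hf'def, Equiv.Perm.mul_apply] using congrArg (h : Equiv.Perm M) this
  -- f' commutes with g
  have hcomm_perm : Commute (f' : Equiv.Perm M) (g : Equiv.Perm M) :=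
    perm_commute_of_disjoint_supp _ _ _ _ hdisj hf'supp hg
  have hcomm : Commute f' g := by
    have : ((f' * g : G) : Equiv.Perm M) = ((g * f' : G) : Equiv.Perm M) := by
      push_cast
      exact hcomm_perm
    exact_mod_cast Subtype.ext this
  -- ⁅f, g⁆ = ⁅f * f'⁻¹, g⁆
  have key : ⁅f, g⁆ = ⁅f * f'⁻¹, g⁆ := by
    rw [commutatorElement_def, commutatorElement_def]
    rw [mul_inv_rev, inv_inv]
    have := hcomm.inv_left.eq
    group
    calc f * g * f⁻¹ * g⁻¹
        = f * (f'⁻¹ * f') * g * f⁻¹ * g⁻¹ := by group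
      _ = f * f'⁻¹ * (f' * g) * f⁻¹ * g⁻¹ := by group
      _ = f * f'⁻¹ * (g * f') * f⁻¹ * g⁻¹ := by rw [hcomm.eq]
      _ = f * f'⁻¹ * g * f' * f⁻¹ * g⁻¹ := by group
  rw [key]
  -- f * f'⁻¹ = f * h * f⁻¹ * h⁻¹ ∈ H
  have hmem : f * f'⁻¹ ∈ H := by
    have : f * f'⁻¹ = (f * h * f⁻¹) * h⁻¹ := by rw [hf'def]; group
    rw [this]
    exact H.mul_mem (hHnormal.conj_mem h hh f) (H.inv_mem hh)
  -- commutator of an element of H (normal) with anything is in H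
  rw [commutatorElement_def]
  have : f * f'⁻¹ * g * (f * f'⁻¹)⁻¹ * g⁻¹ = (f * f'⁻¹) * (g * (f * f'⁻¹)⁻¹ * g⁻¹) := by group
  rw [this]
  exact H.mul_mem hmem (hHnormal.conj_mem _ (H.inv_mem hmem) g)
end
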